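/- Let X be a connected open subset of the complexification E_C = E + iE of a real Banach space E, with X ∩ E nonempty, and let A : X → L(E₁,F₁) be analytic with A(z) Fredholm for all z. If A(z₀) is injective for some z₀ ∈ X ∩ E and the non-injectivity set of A is a proper analytic subset of X, then the non-injectivity set within X ∩ E cannot contain an open subset of E; that is, the set of z ∈ X ∩ E where A(z) is injective is dense in X ∩ E. -/

import Mathlib

/-- `S` is an analytic subset of `X`, proper: locally the common zero set of a family of
analytic functions, at least one of which is not identically zero. -/
def IsProperAnalyticSubset {Z : Type*} [NormedAddCommGroup Z] [NormedSpace ℂ Z]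
    (X S : Set Z) : Prop :=
  ∀ x ∈ X, ∃ U : Set Z, IsOpen U ∧ x ∈ U ∧ U ⊆ X ∧
    ∃ (ι : Type) (f : ι → Z → ℂ), (∀ i, AnalyticOnNhd ℂ (f i) U) ∧
      S ∩ U = {z ∈ U | ∀ i, f i z = 0} ∧ ∃ i, ∃ z ∈ U, f i z ≠ 0

/-- A bounded operator between Banach spaces is Fredholm. -/
def IsFredholmOp {E F : Type*} [NormedAddCommGroup E] [NormedSpace ℂ E]
    [NormedAddCommGroup F] [NormedSpace ℂ F] (A : E →L[ℂ] F) : Prop :=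
  IsClosed (LinearMap.range (A : E →ₗ[ℂ] F) : Set F) ∧ FiniteDimensional ℂ (LinearMap.ker (A : E →ₗ[ℂ] F)) ∧
    FiniteDimensional ℂ (F ⧸ LinearMap.range (A : E →ₗ[ℂ] F))

open Filter Topology Set
open scoped NNReal ENNReal

section AuxLemmas

/-- If a function `ℂ → ℂ` vanishes at all small real points, it vanishes frequently in the
punctured neighborhood of `0`. -/
lemma frequently_zero_of_real_zeros {h : ℂ → ℂ} {d : ℝ} (hd : 0 < d)
    (hzero : ∀ s : ℝ, |s| < d → h (s : ℂ) = 0) :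
    ∃ᶠ t in 𝓝[≠] (0 : ℂ), h t = 0 := by
  rw [Filter.frequently_iff]
  intro V hV
  rw [Metric.mem_nhdsWithin_iff] at hV
  obtain ⟨ε, hε, hsub⟩ := hV
  set s : ℝ := min (d / 2) (ε / 2) with hs
  have hs0 : 0 < s := lt_min (by positivity) (by positivity)
  have hsd : |s| < d := by
    rw [abs_of_pos hs0]
    exact (min_le_left _ _).trans_lt (by linarith)
  refine ⟨(s : ℂ), hsub ⟨?_, ?_⟩, hzero s hsd⟩
  · have : dist ((s : ℝ) : ℂ) 0 = |s| := by
      simp [Complex.dist_eq]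
    rw [Metric.mem_ball, this, abs_of_pos hs0]
    exact (min_le_right _ _).trans_lt (by linarith)
  · exact Complex.ofReal_ne_zero.mpr hs0.ne'

variable {E Z : Type*} [NormedAddCommGroup E] [NormedSpace ℝ E]
  [NormedAddCommGroup Z] [NormedSpace ℂ Z]

/-- Diagonal power-series coefficients along real directions vanish, if the function vanishes
on an open set of real points. -/
lemma diag_coeff_zero_real (ι : E →L[ℝ] Z) (x : E) (f : Z → ℂ)
    {p : FormalMultilinearSeries ℂ Z ℂ} {r : ℝ≥0∞}
    (hp : HasFPowerSeriesOnBall f p (ι x) r)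
    {δ : ℝ} (hδ : 0 < δ)
    (hzero : ∀ x' : E, ‖x' - x‖ < δ → f (ι x') = 0)
    (u : E) (n : ℕ) : p n (fun _ => ι u) = 0 := by
  classical
  set c : ℕ → ℂ := fun m => p m (fun _ => ι u) with hc
  set q : FormalMultilinearSeries ℂ ℂ ℂ :=
    fun m => ContinuousMultilinearMap.mkPiRing ℂ (Fin m) (c m) with hq
  set h : ℂ → ℂ := fun t => f (ι x + t • ι u) with hh
  -- choose a radius `a < r`
  obtain ⟨a, ha0', har⟩ := ENNReal.lt_iff_exists_nnreal_btwn.mp hp.r_pos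
  have ha0 : 0 < a := by exact_mod_cast ha0'
  obtain ⟨C, hC0, hCb⟩ := p.norm_mul_pow_le_of_lt_radius (har.trans_le hp.r_le)
  set M : ℝ≥0 := ‖ι u‖₊ + 1 with hM
  have hM0 : (0 : ℝ≥0) < M := by positivity
  set b : ℝ≥0 := a / M with hb
  have hb0 : 0 < b := div_pos ha0 hM0
  have hbM : b * M ≤ a := by
    rw [hb, div_mul_cancel₀ _ hM0.ne']
  have hqbound : ∀ m : ℕ, ‖q m‖ * (b : ℝ) ^ m ≤ C := by
    intro m
    have h1 : ‖q m‖ = ‖c m‖ := ContinuousMultilinearMap.norm_mkPiRing (c m)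
    have h2 : ‖c m‖ ≤ ‖p m‖ * ‖ι u‖ ^ m := by
      have := (p m).le_opNorm (fun _ => ι u)
      simpa using this
    have h3 : (‖ι u‖ * (b : ℝ)) ^ m ≤ (a : ℝ) ^ m := by
      apply pow_le_pow_left₀ (by positivity)
      have : ‖ι u‖ * (b : ℝ) ≤ (M : ℝ) * (b : ℝ) := by
        apply mul_le_mul_of_nonneg_right _ (by positivity)
        have : ‖ι u‖ ≤ (M : ℝ) := by
          rw [hM]; push_cast; linarith
        exact this
      calc ‖ι u‖ * (b : ℝ) ≤ (M : ℝ) * (b : ℝ) := this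
        _ = ((b * M : ℝ≥0) : ℝ) := by push_cast; ring
        _ ≤ (a : ℝ) := by exact_mod_cast hbM
    calc ‖q m‖ * (b : ℝ) ^ m ≤ (‖p m‖ * ‖ι u‖ ^ m) * (b : ℝ) ^ m := by
          rw [h1]; exact mul_le_mul_of_nonneg_right h2 (by positivity)
      _ = ‖p m‖ * (‖ι u‖ * (b : ℝ)) ^ m := by ring
      _ ≤ ‖p m‖ * (a : ℝ) ^ m := by
          exact mul_le_mul_of_nonneg_left h3 (norm_nonneg _)
      _ ≤ C := hCb m
  have hqball : HasFPowerSeriesOnBall h q 0 b := by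
    refine ⟨q.le_radius_of_bound C hqbound, by exact_mod_cast hb0, ?_⟩
    intro t ht
    have hy : t • ι u ∈ Metric.eball (0 : Z) r := by
      rw [mem_emetric_ball_zero_iff, enorm_eq_nnnorm] at ht ⊢
      have h1 : ‖t • ι u‖₊ = ‖t‖₊ * ‖ι u‖₊ := nnnorm_smul t (ι u)
      have h2 : ‖t‖₊ * ‖ι u‖₊ ≤ ‖t‖₊ * M := by
        apply mul_le_mul_of_nonneg_left _ zero_le
        rw [hM]; exact le_self_add
      rw [h1]
      calc (↑(‖t‖₊ * ‖ι u‖₊) : ℝ≥0∞) ≤ ↑(‖t‖₊ * M) := by exact_mod_cast h2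
        _ < ↑(b * M) := by
            apply ENNReal.coe_lt_coe.mpr
            apply mul_lt_mul_of_pos_right _ hM0
            exact_mod_cast ht
        _ ≤ ↑a := by exact_mod_cast hbM
        _ < r := har
    have hsum := hp.hasSum hy
    have e : ∀ m : ℕ, q m (fun _ => t) = p m (fun _ => t • ι u) := by
      intro m
      have h1 : p m (fun _ : Fin m => t • ι u)
          = (∏ _i : Fin m, t) • p m (fun _ => ι u) := by
        exact (p m).map_smul_univ (fun _ => t) (fun _ => ι u)
      rw [hq]
      rw [ContinuousMultilinearMap.mkPiRing_apply, h1]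
    simp only [zero_add]
    exact HasSum.congr_fun hsum fun m => e m
  have hqAt : HasFPowerSeriesAt h q 0 := hqball.hasFPowerSeriesAt
  -- `h` vanishes on small real points
  set δ' : ℝ := δ / (‖u‖ + 1) with hδ'
  have hδ'0 : 0 < δ' := by positivity
  have hreal : ∀ s : ℝ, |s| < δ' → h (s : ℂ) = 0 := by
    intro s hs
    have e1 : ((s : ℝ) : ℂ) • ι u = ι (s • u) := by
      rw [Complex.coe_smul, ← ι.map_smul]
    have e2 : ι x + ((s : ℝ) : ℂ) • ι u = ι (x + s • u) := by
      rw [e1, ← ι.map_add]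
    rw [hh]
    simp only [e2]
    apply hzero
    have : ‖x + s • u - x‖ = |s| * ‖u‖ := by
      simp [norm_smul, Real.norm_eq_abs]
    rw [this]
    calc |s| * ‖u‖ ≤ |s| * (‖u‖ + 1) := by
          apply mul_le_mul_of_nonneg_left (by linarith) (abs_nonneg s)
      _ < δ' * (‖u‖ + 1) := by
          apply mul_lt_mul_of_pos_right hs (by positivity)
      _ = δ := by rw [hδ']; field_simp
  have hfreq : ∃ᶠ t in 𝓝[≠] (0 : ℂ), h t = 0 := frequently_zero_of_real_zeros hδ'0 hreal
  have hev : ∀ᶠ t in 𝓝 (0 : ℂ), h t = 0 :=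
    (hqAt.analyticAt.frequently_zero_iff_eventually_zero).mp hfreq
  have hq0 : q = 0 := hqAt.eq_zero_of_eventually hev
  have : q n (fun _ => (1 : ℂ)) = 0 := by rw [hq0]; simp
  rw [hq, ContinuousMultilinearMap.mkPiRing_apply] at this
  simpa using this

/-- Key lemma: an analytic function vanishing on an open set of real points vanishes on a
complex neighborhood. -/
lemma eventuallyEq_zero_of_real_zeros (ι : E →L[ℝ] Z)
    (hdecomp : ∀ z : Z, ∃ x y : E, z = ι x + Complex.I • ι y)
    (x : E) (f : Z → ℂ) (hf : AnalyticAt ℂ f (ι x))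
    {δ : ℝ} (hδ : 0 < δ)
    (hzero : ∀ x' : E, ‖x' - x‖ < δ → f (ι x') = 0) :
    f =ᶠ[𝓝 (ι x)] 0 := by
  obtain ⟨p, r, hp⟩ := hf
  have hA : ∀ (u : E) (n : ℕ), p n (fun _ => ι u) = 0 := fun u n =>
    diag_coeff_zero_real ι x f hp hδ hzero u n
  have hB : ∀ (w : Z) (n : ℕ), p n (fun _ => w) = 0 := by
    intro w n
    obtain ⟨u, v, rfl⟩ := hdecomp w
    set ψ : ℂ → ℂ := fun s => p n (fun _ : Fin n => ι u + s • ι v) with hψ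
    have hψa : AnalyticOnNhd ℂ ψ Set.univ := by
      intro s _
      have hinner : AnalyticAt ℂ (fun s : ℂ => (fun _ : Fin n => ι u + s • ι v)) s := by
        have : (fun s : ℂ => (fun _ : Fin n => ι u + s • ι v))
            = (fun s : ℂ => (fun _ : Fin n => ι u)
              + (ContinuousLinearMap.pi (fun _ : Fin n =>
                  (ContinuousLinearMap.id ℂ ℂ).smulRight (ι v))) s) := by
          funext s
          ext i
          simp
        rw [this]
        exact analyticAt_const.add ((ContinuousLinearMap.pi (fun _ : Fin n =>
          (ContinuousLinearMap.id ℂ ℂ).smulRight (ι v))).analyticAt s)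
      exact ((p n).cpolynomialAt.analyticAt).comp hinner
    have hψreal : ∀ s : ℝ, |s| < (1 : ℝ) + |s| → ψ (s : ℂ) = 0 := by
      intro s _
      have e1 : ι u + ((s : ℝ) : ℂ) • ι v = ι (u + s • v) := by
        rw [Complex.coe_smul, ← ι.map_smul, ← ι.map_add]
      rw [hψ]
      simp only [e1]
      exact hA (u + s • v) n
    have hfreq : ∃ᶠ t in 𝓝[≠] (0 : ℂ), ψ t = 0 := by
      apply frequently_zero_of_real_zeros (d := 1) one_pos
      intro s hs
      exact hψreal s (by linarith [abs_nonneg s])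
    have hev : ∀ᶠ t in 𝓝 (0 : ℂ), ψ t = 0 :=
      ((hψa 0 (Set.mem_univ 0)).frequently_zero_iff_eventually_zero).mp hfreq
    have hzero' : Set.EqOn ψ 0 Set.univ :=
      hψa.eqOn_zero_of_preconnected_of_eventuallyEq_zero isPreconnected_univ
        (Set.mem_univ (0 : ℂ)) hev
    have := hzero' (Set.mem_univ Complex.I)
    rw [hψ] at this
    simpa using this
  have hball : ∀ y ∈ Metric.eball (0 : Z) r, f (ι x + y) = 0 := by
    intro y hy
    have hsum := hp.hasSum hy
    have : HasSum (fun n : ℕ => (0 : ℂ)) (f (ι x + y)) := by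
      apply hsum.congr_fun
      intro n
      exact (hB y n).symm
    simpa using this.unique hasSum_zero
  have hmem : Metric.eball (ι x) r ∈ 𝓝 (ι x) := Metric.eball_mem_nhds _ hp.r_pos
  filter_upwards [hmem] with z hz
  have : z - ι x ∈ Metric.eball (0 : Z) r := by
    rw [Metric.mem_eball] at hz ⊢
    rw [edist_eq_enorm_sub] at hz ⊢
    simpa using hz
  have := hball (z - ι x) this
  simpa using this

end AuxLemmas

/-- Real version of generic injectivity: `Z = E + iE` is the complexification of the real
Banach space `E` (realized via a real-linear embedding `ι` with `Z = ι E ⊕ i·ι E`),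
`X ⊆ Z` is connected open meeting `E`, and `A` is an analytic Fredholm-valued map whose
non-injectivity set is a proper analytic subset of `X`.  If `A` is injective at some real
point, then the points of `X ∩ E` where `A` is injective are dense in `X ∩ E`. -/
theorem generic_injectivity_real_points
    {E Z E₁ F₁ : Type*} [NormedAddCommGroup E] [NormedSpace ℝ E]
    [NormedAddCommGroup Z] [NormedSpace ℂ Z]
    [NormedAddCommGroup E₁] [NormedSpace ℂ E₁] [CompleteSpace E₁]
    [NormedAddCommGroup F₁] [NormedSpace ℂ F₁] [CompleteSpace F₁]
    (ι : E →L[ℝ] Z)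
    (hdecomp : ∀ z : Z, ∃ x y : E, z = ι x + Complex.I • ι y)
    (hindep : ∀ x y : E, ι x + Complex.I • ι y = 0 → x = 0 ∧ y = 0)
    (X : Set Z) (hXopen : IsOpen X) (hXconn : IsConnected X)
    (hXreal : ∃ x : E, ι x ∈ X)
    (A : Z → E₁ →L[ℂ] F₁) (hA : AnalyticOnNhd ℂ A X)
    (hFred : ∀ z ∈ X, IsFredholmOp (A z))
    (x₀ : E) (hx₀ : ι x₀ ∈ X) (hinj₀ : Function.Injective (A (ι x₀)))
    (hproper : IsProperAnalyticSubset X {z ∈ X | ¬ Function.Injective (A z)}) :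
    ∀ x : E, ι x ∈ X → ∀ ε > 0, ∃ x' : E, ‖x' - x‖ < ε ∧ ι x' ∈ X ∧
      Function.Injective (A (ι x')) := by
  intro x hx ε hε
  by_contra hcon
  push_neg at hcon
  -- hcon : ∀ x', ‖x' - x‖ < ε → ι x' ∈ X → ¬ Injective (A (ι x'))
  set S : Set Z := {z ∈ X | ¬ Function.Injective (A z)} with hSdef
  set T : Set Z := {z | ∃ ρ > 0, Metric.ball z ρ ⊆ S} with hTdef
  have hTopen : IsOpen T := by
    rw [Metric.isOpen_iff]
    rintro z ⟨ρ, hρ, hsub⟩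
    refine ⟨ρ / 2, by positivity, ?_⟩
    intro z' hz'
    refine ⟨ρ / 2, by positivity, ?_⟩
    intro w hw
    apply hsub
    rw [Metric.mem_ball] at *
    calc dist w z ≤ dist w z' + dist z' z := dist_triangle _ _ _
      _ < ρ / 2 + ρ / 2 := add_lt_add hw hz'
      _ = ρ := by ring
  have hTS : T ⊆ S := by
    rintro z ⟨ρ, hρ, hsub⟩
    exact hsub (Metric.mem_ball_self hρ)
  -- `ι x ∈ T`
  have hT0 : ι x ∈ T := by
    obtain ⟨U, hUopen, hxU, hUX, κ, g, hganal, hSU, -⟩ := hproper (ι x) hx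
    obtain ⟨ρ, hρ, hballU⟩ := Metric.isOpen_iff.mp hUopen _ hxU
    set δ₁ : ℝ := ρ / (‖ι‖ + 1) with hδ₁def
    have hδ₁ : 0 < δ₁ := by positivity
    set δ : ℝ := min δ₁ ε with hδdef
    have hδ : 0 < δ := lt_min hδ₁ hε
    have hrealmem : ∀ x' : E, ‖x' - x‖ < δ → ι x' ∈ Metric.ball (ι x) ρ := by
      intro x' hx'
      rw [Metric.mem_ball, dist_eq_norm]
      have e : ι x' - ι x = ι (x' - x) := by rw [ι.map_sub]
      rw [e]
      calc ‖ι (x' - x)‖ ≤ ‖ι‖ * ‖x' - x‖ := ι.le_opNorm _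
        _ ≤ (‖ι‖ + 1) * ‖x' - x‖ := by
            apply mul_le_mul_of_nonneg_right (by linarith) (norm_nonneg _)
        _ < (‖ι‖ + 1) * δ₁ := by
            apply mul_lt_mul_of_pos_left _ (by positivity)
            exact lt_of_lt_of_le hx' (min_le_left _ _)
        _ = ρ := by rw [hδ₁def]; field_simp
    have hrealzero : ∀ (i : κ) (x' : E), ‖x' - x‖ < δ → g i (ι x') = 0 := by
      intro i x' hx'
      have hmem : ι x' ∈ U := hballU (hrealmem x' hx')
      have hmemX : ι x' ∈ X := hUX hmem
      have hninj : ¬ Function.Injective (A (ι x')) :=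
        hcon x' (lt_of_lt_of_le hx' (min_le_right _ _)) hmemX
      have : ι x' ∈ S ∩ U := ⟨⟨hmemX, hninj⟩, hmem⟩
      rw [hSU] at this
      exact this.2 i
    have hball : Metric.ball (ι x) ρ ⊆ S := by
      intro z hz
      have hzU : z ∈ U := hballU hz
      have hzero' : ∀ i, g i z = 0 := by
        intro i
        have hev : g i =ᶠ[𝓝 (ι x)] 0 :=
          eventuallyEq_zero_of_real_zeros ι hdecomp x (g i) (hganal i _ hxU) hδ
            (hrealzero i)
        have : Set.EqOn (g i) 0 (Metric.ball (ι x) ρ) :=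
          ((hganal i).mono hballU).eqOn_zero_of_preconnected_of_eventuallyEq_zero
            (convex_ball _ _).isPreconnected (Metric.mem_ball_self hρ) hev
        exact this hz
      have : z ∈ S ∩ U := by
        rw [hSU]
        exact ⟨hzU, hzero'⟩
      exact this.1
    exact ⟨ρ, hρ, hball⟩
  -- `closure T ∩ X ⊆ T`
  have hclosed : closure T ∩ X ⊆ T := by
    rintro z ⟨hzc, hzX⟩
    obtain ⟨U, hUopen, hzU, hUX, κ, g, hganal, hSU, -⟩ := hproper z hzX
    obtain ⟨ρ, hρ, hballU⟩ := Metric.isOpen_iff.mp hUopen _ hzU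
    have hne : (Metric.ball z ρ ∩ T).Nonempty :=
      _root_.mem_closure_iff.mp hzc _ Metric.isOpen_ball (Metric.mem_ball_self hρ)
    obtain ⟨w, hwball, hwT⟩ := hne
    obtain ⟨ρw, hρw, hwS⟩ := hwT
    set ρ₂ : ℝ := min ρw (ρ - dist w z) with hρ₂def
    have hρ₂ : 0 < ρ₂ := by
      apply lt_min hρw
      rw [Metric.mem_ball] at hwball
      linarith
    have hsmall : Metric.ball w ρ₂ ⊆ S ∩ U := by
      intro y hy
      rw [Metric.mem_ball] at hy
      constructor
      · apply hwS
        rw [Metric.mem_ball]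
        exact lt_of_lt_of_le hy (min_le_left _ _)
      · apply hballU
        rw [Metric.mem_ball]
        calc dist y z ≤ dist y w + dist w z := dist_triangle _ _ _
          _ < ρ₂ + dist w z := by linarith
          _ ≤ (ρ - dist w z) + dist w z := by
              have := min_le_right ρw (ρ - dist w z)
              linarith [this]
          _ = ρ := by ring
    have hball : Metric.ball z ρ ⊆ S := by
      intro y hy
      have hyU : y ∈ U := hballU hy
      have hzero' : ∀ i, g i y = 0 := by
        intro i
        have hev : g i =ᶠ[𝓝 w] 0 := by
          filter_upwards [Metric.ball_mem_nhds w hρ₂] with y' hy'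
          have : y' ∈ S ∩ U := hsmall hy'
          rw [hSU] at this
          exact this.2 i
        have : Set.EqOn (g i) 0 (Metric.ball z ρ) :=
          ((hganal i).mono hballU).eqOn_zero_of_preconnected_of_eventuallyEq_zero
            (convex_ball _ _).isPreconnected hwball hev
        exact this hy
      have : y ∈ S ∩ U := by
        rw [hSU]
        exact ⟨hyU, hzero'⟩
      exact this.1
    exact ⟨ρ, hρ, hball⟩
  have hXT : X ⊆ T :=
    hXconn.isPreconnected.subset_of_closure_inter_subset hTopen ⟨ι x, hx, hT0⟩
      hclosed
  have : ι x₀ ∈ S := hTS (hXT hx₀)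
  exact this.2 hinj₀
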